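/- Let s > 0, c, C > 0, r ∈ (1,∞). Suppose u : (0,∞) → [0,∞) measurable and (b_j)_{j∈ℤ} nonnegative satisfy b_j ≤ C ∫₀^∞ t^s 2^{2j(s+1)} e^{-ct2^{2j}} u(t) dt for all j ∈ ℤ. Then Σ_{j∈ℤ} 2^{-2jsr} b_j^r ≤ C' ∫₀^∞ t^{rs} u(t)^r dt/t for a constant C' depending only on s, c, C, r. -/

import Mathlib

open MeasureTheory Set Real


lemma lint_exp {a : ℝ} (ha : 0 < a) :
    ∫⁻ t in Ioi (0:ℝ), ENNReal.ofReal (Real.exp (-(a * t))) = ENNReal.ofReal a⁻¹ := by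
  have hint : IntegrableOn (fun t : ℝ => Real.exp (-(a * t))) (Ioi 0) := by
    simpa [neg_mul] using exp_neg_integrableOn_Ioi 0 ha
  rw [← ofReal_integral_eq_lintegral_ofReal hint (ae_of_all _ fun t => (Real.exp_pos _).le)]
  congr 1
  have h := integral_comp_mul_left_Ioi (fun x => Real.exp (-x)) 0 ha
  simp only [mul_zero, integral_exp_neg_Ioi_zero, smul_eq_mul, mul_one] at h
  simpa using h


lemma exp_quad {y : ℝ} (hy : 0 ≤ y) : y ^ 2 / 4 ≤ Real.exp y := by
  have h1 : 1 + y / 2 ≤ Real.exp (y / 2) := by linarith [Real.add_one_le_exp (y / 2)]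
  calc y ^ 2 / 4 = (y / 2) ^ 2 := by ring
    _ ≤ (1 + y / 2) ^ 2 := by apply pow_le_pow_left₀ (by positivity) (by linarith)
    _ ≤ Real.exp (y / 2) ^ 2 := by apply pow_le_pow_left₀ (by positivity) h1
    _ = Real.exp y := by
        rw [← Real.exp_nat_mul]; push_cast; ring_nf

lemma ptwise {c₂ x : ℝ} (hc : 0 < c₂) (hx : 0 < x) :
    x * Real.exp (-(c₂ * x)) ≤ (1 + 4 / c₂ ^ 2) * min x x⁻¹ := by
  have hA0 : (0:ℝ) ≤ 4 / c₂ ^ 2 := by positivity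
  rcases le_total x 1 with h | h
  · have hmin : min x x⁻¹ = x := min_eq_left (by
      calc x ≤ 1 := h
        _ ≤ x⁻¹ := (one_le_inv₀ hx).2 h)
    rw [hmin]
    have he : Real.exp (-(c₂ * x)) ≤ 1 := Real.exp_le_one_iff.2 (by nlinarith)
    nlinarith [hx.le]
  · have hmin : min x x⁻¹ = x⁻¹ := min_eq_right (by
      calc x⁻¹ ≤ 1 := (inv_le_one₀ hx).2 h
        _ ≤ x := h)
    rw [hmin]
    have hEpos := Real.exp_pos (c₂ * x)
    have hE := exp_quad (y := c₂ * x) (by positivity)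
    rw [Real.exp_neg, show (1 + 4 / c₂ ^ 2) * x⁻¹ = (1 + 4 / c₂ ^ 2) / x from
      (div_eq_mul_inv _ _).symm, le_div_iff₀ hx]
    have hxy : x * (Real.exp (c₂ * x))⁻¹ * x = x ^ 2 / Real.exp (c₂ * x) := by
      field_simp
    rw [hxy, div_le_iff₀ hEpos]
    have h2 : x ^ 2 * c₂ ^ 2 ≤ 4 * Real.exp (c₂ * x) := by nlinarith
    have h3 : (1 + 4 / c₂ ^ 2) * Real.exp (c₂ * x) * c₂ ^ 2
        = c₂ ^ 2 * Real.exp (c₂ * x) + 4 * Real.exp (c₂ * x) := by field_simp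
    have h4 : x ^ 2 * c₂ ^ 2 ≤ (1 + 4 / c₂ ^ 2) * Real.exp (c₂ * x) * c₂ ^ 2 := by
      rw [h3]; nlinarith [mul_pos hEpos (pow_pos hc 2)]
    exact le_of_mul_le_mul_right h4 (pow_pos hc 2)

lemma sum_min {t : ℝ} (ht : 0 < t) :
    ∑' j : ℤ, ENNReal.ofReal (min (t * 4 ^ j) (t * 4 ^ j)⁻¹) ≤ ENNReal.ofReal 8 := by
  obtain ⟨n, hn1, hn2⟩ := exists_mem_Ico_zpow (x := t⁻¹) (y := (4:ℝ)) (inv_pos.2 ht) (by norm_num)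
  set G : ℤ → ENNReal := fun j => ENNReal.ofReal (min (t * 4 ^ j) (t * 4 ^ j)⁻¹) with hG
  have h1t : t * (4:ℝ) ^ n ≤ 1 := by
    calc t * (4:ℝ) ^ n ≤ t * t⁻¹ := by
          exact mul_le_mul_of_nonneg_left hn1 ht.le
      _ = 1 := mul_inv_cancel₀ ht.ne'
  have h2t : (1:ℝ) < t * 4 ^ (n + 1) := by
    calc (1:ℝ) = t * t⁻¹ := (mul_inv_cancel₀ ht.ne').symm
      _ < t * 4 ^ (n + 1) := by exact mul_lt_mul_of_pos_left hn2 ht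
  have hre : ∑' j : ℤ, G j = ∑' k : ℤ, G ((Equiv.addLeft n) k) :=
    ((Equiv.addLeft n).tsum_eq G).symm
  rw [hre]
  have hsplit : ∑' k : ℤ, G (n + k) = (∑' m : ℕ, G (n + (m : ℤ)))
      + ∑' m : ℕ, G (n + (-((m : ℤ) + 1))) :=
    tsum_of_nat_of_neg_add_one ENNReal.summable ENNReal.summable
  simp only [Equiv.coe_addLeft]
  rw [hsplit]
  have hA : ∀ m : ℕ, G (n + (m : ℤ)) ≤ ENNReal.ofReal (4 * (1/4 : ℝ) ^ m) := by
    intro m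
    apply ENNReal.ofReal_le_ofReal
    rcases Nat.eq_zero_or_pos m with hm | hm
    · subst hm
      simp only [Nat.cast_zero, add_zero, pow_zero, mul_one]
      calc min (t * 4 ^ n) (t * 4 ^ n)⁻¹ ≤ t * 4 ^ n := min_le_left _ _
        _ ≤ 1 := h1t
        _ ≤ 4 := by norm_num
    · have hgt : (4:ℝ) ^ ((m : ℤ) - 1) ≤ t * 4 ^ (n + (m : ℤ)) := by
        have : t * 4 ^ (n + (m : ℤ)) = (t * 4 ^ (n + 1)) * 4 ^ ((m : ℤ) - 1) := by
          rw [mul_assoc, ← zpow_add₀ (by norm_num : (4:ℝ) ≠ 0)]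
          ring_nf
        rw [this]
        nlinarith [zpow_pos (by norm_num : (0:ℝ) < 4) ((m : ℤ) - 1)]
      calc min (t * 4 ^ (n + (m : ℤ))) (t * 4 ^ (n + (m : ℤ)))⁻¹
          ≤ (t * 4 ^ (n + (m : ℤ)))⁻¹ := min_le_right _ _
        _ ≤ ((4:ℝ) ^ ((m : ℤ) - 1))⁻¹ := by
            exact inv_anti₀ (zpow_pos (by norm_num) _) hgt
        _ = 4 * (1/4 : ℝ) ^ m := by
            rw [← zpow_neg, neg_sub, zpow_sub₀ (by norm_num : (4:ℝ) ≠ 0), zpow_one,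
              zpow_natCast]
            simp [div_eq_mul_inv, inv_pow]
  have hB : ∀ m : ℕ, G (n + (-((m : ℤ) + 1))) ≤ ENNReal.ofReal ((1/4 : ℝ) ^ m) := by
    intro m
    apply ENNReal.ofReal_le_ofReal
    have heq : t * (4:ℝ) ^ (n + (-((m : ℤ) + 1))) = (t * 4 ^ n) * 4 ^ (-((m : ℤ) + 1)) := by
      rw [mul_assoc, ← zpow_add₀ (by norm_num : (4:ℝ) ≠ 0)]
    calc min (t * 4 ^ (n + (-((m : ℤ) + 1)))) (t * 4 ^ (n + (-((m : ℤ) + 1))))⁻¹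
        ≤ t * 4 ^ (n + (-((m : ℤ) + 1))) := min_le_left _ _
      _ = (t * 4 ^ n) * 4 ^ (-((m : ℤ) + 1)) := heq
      _ ≤ 1 * 4 ^ (-((m : ℤ) + 1)) := by
          exact mul_le_mul_of_nonneg_right h1t (by positivity)
      _ = ((1/4 : ℝ)) ^ (m + 1) := by
          have hcast : -(((m:ℤ)) + 1) = -(((m+1 : ℕ)):ℤ) := by push_cast; ring
          rw [one_mul, hcast, one_div, inv_pow, ← zpow_natCast (4:ℝ) (m+1), ← zpow_neg]
      _ ≤ (1/4 : ℝ) ^ m := by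
          apply pow_le_pow_of_le_one (by norm_num) (by norm_num)
          omega
  calc (∑' m : ℕ, G (n + (m : ℤ))) + ∑' m : ℕ, G (n + (-((m : ℤ) + 1)))
      ≤ (∑' m : ℕ, ENNReal.ofReal (4 * (1/4 : ℝ) ^ m))
        + ∑' m : ℕ, ENNReal.ofReal ((1/4 : ℝ) ^ m) := by
        exact add_le_add (ENNReal.tsum_le_tsum hA) (ENNReal.tsum_le_tsum hB)
    _ = ENNReal.ofReal (∑' m : ℕ, 4 * (1/4 : ℝ) ^ m)
        + ENNReal.ofReal (∑' m : ℕ, (1/4 : ℝ) ^ m) := by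
        rw [ENNReal.ofReal_tsum_of_nonneg (fun m => by positivity)
          ((summable_geometric_of_lt_one (by norm_num) (by norm_num)).mul_left 4),
          ENNReal.ofReal_tsum_of_nonneg (fun m => by positivity)
          (summable_geometric_of_lt_one (by norm_num) (by norm_num))]
    _ ≤ ENNReal.ofReal 8 := by
        rw [tsum_mul_left, tsum_geometric_of_lt_one (by norm_num) (by norm_num),
          ← ENNReal.ofReal_add (by norm_num) (by norm_num)]
        apply ENNReal.ofReal_le_ofReal
        norm_num

lemma sum_exp {c₂ : ℝ} (hc : 0 < c₂) {t : ℝ} (ht : 0 < t) :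
    ∑' j : ℤ, ENNReal.ofReal (t * 4 ^ j * Real.exp (-(c₂ * (t * 4 ^ j)))) ≤
      ENNReal.ofReal ((1 + 4 / c₂ ^ 2) * 8) := by
  have step1 : ∑' j : ℤ, ENNReal.ofReal (t * 4 ^ j * Real.exp (-(c₂ * (t * 4 ^ j))))
      ≤ ∑' j : ℤ, ENNReal.ofReal ((1 + 4 / c₂ ^ 2) * min (t * 4 ^ j) (t * 4 ^ j)⁻¹) :=
    ENNReal.tsum_le_tsum fun j => ENNReal.ofReal_le_ofReal (ptwise hc (by positivity))
  refine step1.trans ?_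
  have step2 : ∀ j : ℤ, ENNReal.ofReal ((1 + 4 / c₂ ^ 2) * min (t * 4 ^ j) (t * 4 ^ j)⁻¹)
      = ENNReal.ofReal (1 + 4 / c₂ ^ 2) * ENNReal.ofReal (min (t * 4 ^ j) (t * 4 ^ j)⁻¹) :=
    fun j => ENNReal.ofReal_mul (by positivity)
  simp_rw [step2]
  rw [ENNReal.tsum_mul_left, ENNReal.ofReal_mul (by positivity)]
  exact mul_le_mul_right (sum_min ht) _

theorem besov_from_heat_lr (s c C r : ℝ) (hs : 0 < s) (hc : 0 < c) (hC : 0 < C)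
    (hr : 1 < r) :
    ∃ C' : ℝ, 0 < C' ∧ ∀ (u : ℝ → ENNReal) (b : ℤ → ENNReal), Measurable u →
      (∀ j : ℤ, b j ≤ ENNReal.ofReal C * ∫⁻ t in Ioi (0 : ℝ),
          ENNReal.ofReal (t ^ s * (2 : ℝ) ^ (2 * (j : ℝ) * (s + 1)) *
            Real.exp (-(c * t * (2 : ℝ) ^ (2 * (j : ℝ))))) * u t) →
      (∑' j : ℤ, ENNReal.ofReal ((2 : ℝ) ^ (-(2 * (j : ℝ) * s * r))) * b j ^ r) ≤
        ENNReal.ofReal C' * ∫⁻ t in Ioi (0 : ℝ),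
          ENNReal.ofReal (t ^ (r * s)) * u t ^ r * ENNReal.ofReal t⁻¹ := by
  have hr0 : 0 < r := lt_trans one_pos hr
  obtain ⟨q, hqdef⟩ : ∃ x : ℝ, x = Real.conjExponent r := ⟨_, rfl⟩
  have hpq : r.HolderConjugate q := by rw [hqdef]; exact Real.HolderConjugate.conjExponent hr
  have hq0 : 0 < q := hpq.symm.pos
  obtain ⟨c₂, hc₂def⟩ : ∃ x : ℝ, x = c / 2 * r := ⟨_, rfl⟩
  have hc₂ : 0 < c₂ := by rw [hc₂def]; positivity
  obtain ⟨Kq, hKqdef⟩ : ∃ x : ℝ, x = ((q * (c / 2))⁻¹) ^ (1 / q) := ⟨_, rfl⟩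
  have hKq : 0 < Kq := by
    rw [hKqdef]
    exact Real.rpow_pos_of_pos (inv_pos.2 (mul_pos hq0 (by positivity))) _
  obtain ⟨M, hMdef⟩ : ∃ x : ℝ, x = (1 + 4 / c₂ ^ 2) * 8 := ⟨_, rfl⟩
  have hM : 0 < M := by rw [hMdef]; positivity
  refine ⟨(C * Kq) ^ r * M, mul_pos (Real.rpow_pos_of_pos (mul_pos hC hKq) r) hM, ?_⟩
  intro u b hu hb
  obtain ⟨Ir, hIr⟩ : ∃ F : ℤ → ENNReal, F = fun j => ∫⁻ t in Ioi (0:ℝ),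
      ENNReal.ofReal (t ^ (s * r) * Real.exp (-(c₂ * (t * 4 ^ j)))) * u t ^ r := ⟨_, rfl⟩
  have hIrm : ∀ j : ℤ, Measurable (fun t : ℝ =>
      ENNReal.ofReal (t ^ (s * r) * Real.exp (-(c₂ * (t * 4 ^ j)))) * u t ^ r) := by
    intro j
    exact (((measurable_id.pow measurable_const).mul
      ((((measurable_id.mul_const ((4:ℝ) ^ j)).const_mul c₂).neg).exp)).ennreal_ofReal).mul
      (hu.pow measurable_const)
  have key : ∀ j : ℤ, ENNReal.ofReal ((2:ℝ) ^ (-(2 * (j:ℝ) * s * r))) * b j ^ r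
      ≤ ENNReal.ofReal ((C * Kq) ^ r) * (ENNReal.ofReal ((4:ℝ) ^ j) * Ir j) := by
    intro j
    obtain ⟨a, hadef⟩ : ∃ x : ℝ, x = (4:ℝ) ^ j := ⟨_, rfl⟩
    have ha : 0 < a := by rw [hadef]; positivity
    rw [← hadef]
    have hpow : ∀ y : ℝ, (2:ℝ) ^ (2 * (j:ℝ) * y) = a ^ y := by
      intro y
      rw [Real.rpow_mul (by norm_num : (0:ℝ) ≤ 2) (2 * (j:ℝ)) y]
      congr 1
      rw [Real.rpow_mul (by norm_num : (0:ℝ) ≤ 2) 2 (j:ℝ),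
        show ((2:ℝ) ^ (2:ℝ)) = 4 by
          rw [show (2:ℝ) = ((2:ℕ):ℝ) by norm_num, Real.rpow_natCast]; norm_num,
        Real.rpow_intCast, hadef]
    have h2j : (2:ℝ) ^ (2 * (j:ℝ)) = a := by simpa using hpow 1
    have hw : (2:ℝ) ^ (-(2 * (j:ℝ) * s * r)) = a ^ (-(s * r)) := by
      rw [show -(2 * (j:ℝ) * s * r) = 2 * (j:ℝ) * (-(s * r)) by ring, hpow]
    have hIrj : Ir j = ∫⁻ t in Ioi (0:ℝ),
        ENNReal.ofReal (t ^ (s * r) * Real.exp (-(c₂ * (t * 4 ^ j)))) * u t ^ r := by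
      rw [hIr]
    -- rewrite the hypothesis integral
    have hint_eq : (∫⁻ t in Ioi (0:ℝ), ENNReal.ofReal (t ^ s * (2:ℝ) ^ (2 * (j:ℝ) * (s+1)) *
          Real.exp (-(c * t * (2:ℝ) ^ (2 * (j:ℝ))))) * u t)
        = ENNReal.ofReal (a ^ (s+1)) * ∫⁻ t in Ioi (0:ℝ),
          (ENNReal.ofReal (t ^ s * Real.exp (-(c/2 * (t * a)))) * u t) *
            ENNReal.ofReal (Real.exp (-(c/2 * (t * a)))) := by
      rw [← lintegral_const_mul' _ _ ENNReal.ofReal_ne_top]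
      apply setLIntegral_congr_fun measurableSet_Ioi
      intro t ht
      have ht0 : (0:ℝ) < t := ht
      dsimp only
      rw [hpow (s+1), h2j]
      have hexp : Real.exp (-(c * t * a))
          = Real.exp (-(c/2 * (t * a))) * Real.exp (-(c/2 * (t * a))) := by
        rw [← Real.exp_add]; congr 1; ring
      have h1 : ENNReal.ofReal (a ^ (s+1)) *
            ((ENNReal.ofReal (t ^ s * Real.exp (-(c/2 * (t * a)))) * u t) *
              ENNReal.ofReal (Real.exp (-(c/2 * (t * a)))))
          = ENNReal.ofReal (a ^ (s+1) * ((t ^ s * Real.exp (-(c/2 * (t * a)))) *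
              Real.exp (-(c/2 * (t * a))))) * u t := by
        rw [ENNReal.ofReal_mul (Real.rpow_pos_of_pos ha (s+1)).le,
          ENNReal.ofReal_mul (mul_nonneg (Real.rpow_pos_of_pos ht0 s).le (Real.exp_pos _).le)]
        ring
      rw [hexp, h1]
      congr 1
      ring
    -- Hoelder
    have hfm : AEMeasurable (fun t : ℝ =>
        ENNReal.ofReal (t ^ s * Real.exp (-(c/2 * (t * a)))) * u t)
        (volume.restrict (Ioi 0)) :=
      ((((measurable_id.pow measurable_const).mul
        ((((measurable_id.mul_const a).const_mul (c/2)).neg).exp)).ennreal_ofReal).mul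
        hu).aemeasurable
    have hgm : AEMeasurable (fun t : ℝ => ENNReal.ofReal (Real.exp (-(c/2 * (t * a)))))
        (volume.restrict (Ioi 0)) :=
      (((((measurable_id.mul_const a).const_mul (c/2)).neg).exp).ennreal_ofReal).aemeasurable
    have hHo := ENNReal.lintegral_mul_le_Lp_mul_Lq (volume.restrict (Ioi 0)) hpq hfm hgm
    simp only [Pi.mul_apply] at hHo
    have hcqa : (0:ℝ) < c/2 * q * a :=
      mul_pos (mul_pos (by positivity) hq0) ha
    have hgq : (∫⁻ t in Ioi (0:ℝ), (ENNReal.ofReal (Real.exp (-(c/2 * (t * a))))) ^ q)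
        = ENNReal.ofReal ((c/2 * q * a)⁻¹) := by
      have hpt : ∀ t : ℝ, (ENNReal.ofReal (Real.exp (-(c/2 * (t * a))))) ^ q
          = ENNReal.ofReal (Real.exp (-((c/2 * q * a) * t))) := by
        intro t
        rw [ENNReal.ofReal_rpow_of_pos (Real.exp_pos _), ← Real.exp_mul]
        congr 2
        ring
      simp_rw [hpt]
      exact lint_exp hcqa
    have hfr : (∫⁻ t in Ioi (0:ℝ),
        (ENNReal.ofReal (t ^ s * Real.exp (-(c/2 * (t * a)))) * u t) ^ r) = Ir j := by
      rw [hIrj]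
      apply setLIntegral_congr_fun measurableSet_Ioi
      intro t ht
      have ht0 : (0:ℝ) < t := ht
      have hre : (t ^ s * Real.exp (-(c/2 * (t * a)))) ^ r
          = t ^ (s * r) * Real.exp (-(c₂ * (t * ((4:ℝ) ^ j)))) := by
        rw [Real.mul_rpow (Real.rpow_pos_of_pos ht0 s).le (Real.exp_pos _).le,
          ← Real.rpow_mul ht0.le, ← Real.exp_mul, hadef]
        congr 2
        rw [hc₂def]
        ring
      dsimp only
      rw [ENNReal.mul_rpow_of_nonneg _ _ hr0.le,
        ENNReal.ofReal_rpow_of_pos (mul_pos (Real.rpow_pos_of_pos ht0 s) (Real.exp_pos _)), hre]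
    -- combine
    have hb2 : b j ≤ ENNReal.ofReal (C * (a ^ (s+1) * (Kq * a ^ (-(1/q))))) * (Ir j) ^ (1/r) := by
      refine (hb j).trans ?_
      rw [hint_eq]
      have hgq2 : ((∫⁻ t in Ioi (0:ℝ),
          (ENNReal.ofReal (Real.exp (-(c/2 * (t * a))))) ^ q)) ^ (1/q)
          = ENNReal.ofReal (Kq * a ^ (-(1/q))) := by
        rw [hgq, ENNReal.ofReal_rpow_of_pos (inv_pos.2 hcqa)]
        congr 1
        rw [show (c/2 * q * a)⁻¹ = (q * (c/2))⁻¹ * a⁻¹ by rw [mul_inv]; ring,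
          Real.mul_rpow (inv_pos.2 (mul_pos hq0 (by positivity))).le (inv_pos.2 ha).le,
          hKqdef, Real.inv_rpow ha.le, ← Real.rpow_neg ha.le]
      calc ENNReal.ofReal C * (ENNReal.ofReal (a ^ (s+1)) * ∫⁻ t in Ioi (0:ℝ),
            (ENNReal.ofReal (t ^ s * Real.exp (-(c/2 * (t * a)))) * u t) *
              ENNReal.ofReal (Real.exp (-(c/2 * (t * a)))))
          ≤ ENNReal.ofReal C * (ENNReal.ofReal (a ^ (s+1)) *
              ((Ir j) ^ (1/r) * ENNReal.ofReal (Kq * a ^ (-(1/q))))) := by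
            refine mul_le_mul_right (mul_le_mul_right ?_ _) _
            refine hHo.trans ?_
            rw [hfr, hgq2]
        _ = ENNReal.ofReal (C * (a ^ (s+1) * (Kq * a ^ (-(1/q))))) * (Ir j) ^ (1/r) := by
            rw [ENNReal.ofReal_mul (q := a ^ (s+1) * (Kq * a ^ (-(1/q)))) hC.le,
              ENNReal.ofReal_mul (q := Kq * a ^ (-(1/q))) (Real.rpow_pos_of_pos ha (s+1)).le]
            ring
    have hD : (0:ℝ) < C * (a ^ (s+1) * (Kq * a ^ (-(1/q)))) :=
      mul_pos hC (mul_pos (Real.rpow_pos_of_pos ha _)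
        (mul_pos hKq (Real.rpow_pos_of_pos ha _)))
    have hb3 : b j ^ r ≤ ENNReal.ofReal ((C * (a ^ (s+1) * (Kq * a ^ (-(1/q))))) ^ r) * Ir j := by
      calc b j ^ r
          ≤ (ENNReal.ofReal (C * (a ^ (s+1) * (Kq * a ^ (-(1/q))))) * (Ir j) ^ (1/r)) ^ r :=
            ENNReal.rpow_le_rpow hb2 hr0.le
        _ = ENNReal.ofReal ((C * (a ^ (s+1) * (Kq * a ^ (-(1/q))))) ^ r) * Ir j := by
            rw [ENNReal.mul_rpow_of_nonneg _ _ hr0.le, ENNReal.ofReal_rpow_of_pos hD,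
              ← ENNReal.rpow_mul, one_div_mul_cancel hr0.ne', ENNReal.rpow_one]
    have hE : -(s*r) + ((s+1) * r + -(1/q) * r) = 1 := by
      have h := hpq.inv_add_inv_eq_one
      have hq' : q⁻¹ = 1 - r⁻¹ := by linarith
      rw [one_div, hq']
      have h2 : -(s*r) + ((s+1) * r + -(1 - r⁻¹) * r) = r⁻¹ * r := by ring
      rw [h2, inv_mul_cancel₀ hr0.ne']
    have hreal : a ^ (-(s*r)) * (C * (a ^ (s+1) * (Kq * a ^ (-(1/q))))) ^ r
        = (C * Kq) ^ r * a := by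
      rw [Real.mul_rpow hC.le (mul_pos (Real.rpow_pos_of_pos ha _)
          (mul_pos hKq (Real.rpow_pos_of_pos ha _))).le,
        Real.mul_rpow (Real.rpow_pos_of_pos ha _).le
          (mul_pos hKq (Real.rpow_pos_of_pos ha _)).le,
        Real.mul_rpow hKq.le (Real.rpow_pos_of_pos ha _).le,
        ← Real.rpow_mul ha.le, ← Real.rpow_mul ha.le,
        Real.mul_rpow hC.le hKq.le]
      calc a ^ (-(s*r)) * (C ^ r * (a ^ ((s+1) * r) * (Kq ^ r * a ^ (-(1/q) * r))))
          = (C ^ r * Kq ^ r) * (a ^ (-(s*r)) * (a ^ ((s+1) * r) * a ^ (-(1/q) * r))) := by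
            ring
        _ = (C ^ r * Kq ^ r) * a ^ (-(s*r) + ((s+1) * r + -(1/q) * r)) := by
            rw [← Real.rpow_add ha, ← Real.rpow_add ha]
        _ = C ^ r * Kq ^ r * a := by rw [hE, Real.rpow_one]
    rw [hw]
    calc ENNReal.ofReal (a ^ (-(s*r))) * b j ^ r
        ≤ ENNReal.ofReal (a ^ (-(s*r))) *
            (ENNReal.ofReal ((C * (a ^ (s+1) * (Kq * a ^ (-(1/q))))) ^ r) * Ir j) :=
          mul_le_mul_right hb3 _
      _ = ENNReal.ofReal ((C * Kq) ^ r) * (ENNReal.ofReal a * Ir j) := by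
          rw [← mul_assoc, ← ENNReal.ofReal_mul (Real.rpow_pos_of_pos ha _).le, hreal,
            ENNReal.ofReal_mul (Real.rpow_pos_of_pos (mul_pos hC hKq) r).le, mul_assoc]
  -- sum over j
  calc (∑' j : ℤ, ENNReal.ofReal ((2:ℝ) ^ (-(2 * (j:ℝ) * s * r))) * b j ^ r)
      ≤ ∑' j : ℤ, ENNReal.ofReal ((C * Kq) ^ r) * (ENNReal.ofReal ((4:ℝ) ^ j) * Ir j) :=
        ENNReal.tsum_le_tsum key
    _ = ENNReal.ofReal ((C * Kq) ^ r) * ∑' j : ℤ, ENNReal.ofReal ((4:ℝ) ^ j) * Ir j :=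
        ENNReal.tsum_mul_left
    _ = ENNReal.ofReal ((C * Kq) ^ r) * ∫⁻ t in Ioi (0:ℝ), ∑' j : ℤ,
          ENNReal.ofReal ((4:ℝ) ^ j) *
            (ENNReal.ofReal (t ^ (s * r) * Real.exp (-(c₂ * (t * 4 ^ j)))) * u t ^ r) := by
        congr 1
        rw [lintegral_tsum (fun j => (((hIrm j).const_mul _)).aemeasurable)]
        congr 1
        funext j
        rw [hIr]
        exact (lintegral_const_mul' _ _ ENNReal.ofReal_ne_top).symm
    _ ≤ ENNReal.ofReal ((C * Kq) ^ r) * ∫⁻ t in Ioi (0:ℝ), ENNReal.ofReal M *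
          (ENNReal.ofReal (t ^ (r * s)) * u t ^ r * ENNReal.ofReal t⁻¹) := by
        apply mul_le_mul_right
        apply lintegral_mono_ae
        rw [ae_restrict_iff' measurableSet_Ioi]
        apply ae_of_all
        intro t ht
        have ht0 : (0:ℝ) < t := ht
        rw [hMdef]
        have hterm : ∀ j : ℤ, ENNReal.ofReal ((4:ℝ) ^ j) *
            (ENNReal.ofReal (t ^ (s * r) * Real.exp (-(c₂ * (t * 4 ^ j)))) * u t ^ r)
            = (ENNReal.ofReal (t ^ (r * s)) * u t ^ r * ENNReal.ofReal t⁻¹) *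
              ENNReal.ofReal (t * 4 ^ j * Real.exp (-(c₂ * (t * 4 ^ j)))) := by
          intro j
          have hL : ENNReal.ofReal ((4:ℝ) ^ j) *
              (ENNReal.ofReal (t ^ (s * r) * Real.exp (-(c₂ * (t * 4 ^ j)))) * u t ^ r)
              = ENNReal.ofReal ((4:ℝ) ^ j * (t ^ (s * r) * Real.exp (-(c₂ * (t * 4 ^ j))))) *
                u t ^ r := by
            rw [ENNReal.ofReal_mul (by positivity : (0:ℝ) ≤ (4:ℝ) ^ j)]
            ring
          have hR : ENNReal.ofReal (t ^ (r * s) * (t⁻¹ *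
                (t * 4 ^ j * Real.exp (-(c₂ * (t * 4 ^ j)))))) * u t ^ r
              = (ENNReal.ofReal (t ^ (r * s)) * u t ^ r * ENNReal.ofReal t⁻¹) *
                ENNReal.ofReal (t * 4 ^ j * Real.exp (-(c₂ * (t * 4 ^ j)))) := by
            rw [ENNReal.ofReal_mul (Real.rpow_pos_of_pos ht0 (r * s)).le,
              ENNReal.ofReal_mul (inv_pos.2 ht0).le]
            ring
          rw [hL, ← hR]
          congr 1
          congr 1
          rw [mul_comm r s]
          field_simp
        simp_rw [hterm]
        rw [ENNReal.tsum_mul_left]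
        rw [show ENNReal.ofReal ((1 + 4 / c₂ ^ 2) * 8) *
              (ENNReal.ofReal (t ^ (r * s)) * u t ^ r * ENNReal.ofReal t⁻¹)
            = (ENNReal.ofReal (t ^ (r * s)) * u t ^ r * ENNReal.ofReal t⁻¹) *
              ENNReal.ofReal ((1 + 4 / c₂ ^ 2) * 8) from by ring]
        exact mul_le_mul_right (sum_exp hc₂ ht0) _
    _ = ENNReal.ofReal ((C * Kq) ^ r * M) * ∫⁻ t in Ioi (0:ℝ),
          ENNReal.ofReal (t ^ (r * s)) * u t ^ r * ENNReal.ofReal t⁻¹ := by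
        rw [lintegral_const_mul' _ _ ENNReal.ofReal_ne_top,
          ENNReal.ofReal_mul (Real.rpow_pos_of_pos (mul_pos hC hKq) r).le, mul_assoc]
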